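/- Let X be a nonempty finite set, N ≥ 1, let q^ref be a Markov process on X^{N+2} with full support, and let q be a process on X^{N+2} reciprocal with respect to q^ref with full-support endpoint coupling q(x_0, x_1). Let m be a Markov process on X^{N+2} with full-support transition probabilities and m(x_0) = q(x_0). Then KL( q || m ) = Σ_{n=1}^{N} E_{q(x_0, x_1)} E_{q^ref(x_{t_{n-1}} | x_0, x_1)} KL( q^ref(x_{t_n} | x_{t_{n-1}}, x_1) || m(x_{t_n} | x_{t_{n-1}}) ) − E_{q(x_0, x_1)} E_{q^ref(x_{t_N} | x_0, x_1)} [ log m(x_1 | x_{t_N}) ] + E_{q(x_0, x_1)} [ log q(x_1 | x_0) ], where by convention x_{t_0} := x_0, so that for n = 1 the inner expectation over x_{t_0} is deterministic. -/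

import Mathlib

open Finset

/-- A probability mass function on a finite type. -/
def IsPMF {Z : Type*} [Fintype Z] (p : Z → ℝ) : Prop :=
  (∀ z, 0 ≤ p z) ∧ ∑ z, p z = 1

/-- KL divergence between two pmfs on a finite type (with `0 log 0 := 0`,
which is automatic since `0 * log (0/b) = 0`). -/
noncomputable def KLd {Z : Type*} [Fintype Z] (a b : Z → ℝ) : ℝ :=
  ∑ z, a z * Real.log (a z / b z)

/-- Trajectories with `N` intermediate time steps: indices `0, 1, …, N+1`,
where index `0` is time `0` and index `N+1` is time `1`. -/
abbrev Traj (X : Type*) (N : ℕ) := Fin (N + 2) → X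

variable {X : Type*} [Fintype X] [DecidableEq X] {N : ℕ}

/-- One-time marginal of a process at time index `i`. -/
noncomputable def timeMarg (q : Traj X N → ℝ) (i : Fin (N + 2)) (x : X) : ℝ :=
  ∑ ω : Traj X N, if ω i = x then q ω else 0

/-- Joint marginal of the endpoints `(x_0, x_1)`. -/
noncomputable def endMarg (q : Traj X N → ℝ) (a b : X) : ℝ :=
  ∑ ω : Traj X N, if ω 0 = a ∧ ω (Fin.last (N + 1)) = b then q ω else 0

/-- Joint marginal at the neighboring time indices `n` and `n+1`. -/
noncomputable def pairMarg (q : Traj X N → ℝ) (n : Fin (N + 1)) (y z : X) : ℝ :=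
  ∑ ω : Traj X N, if ω n.castSucc = y ∧ ω n.succ = z then q ω else 0

/-- Transition probability `q(x_{t_n} = z | x_{t_{n-1}} = y)` for the step from
time index `n` to `n+1`. -/
noncomputable def transP (q : Traj X N → ℝ) (n : Fin (N + 1)) (y z : X) : ℝ :=
  pairMarg q n y z / timeMarg q n.castSucc y

/-- Glue endpoints `a`, `b` and inner states `v` into a trajectory. -/
def glue (a : X) (v : Fin N → X) (b : X) : Traj X N :=
  Fin.cons a (Fin.snoc v b)

/-- The bridge `q(x_in | x_0 = a, x_1 = b)`, as a function of the inner states. -/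
noncomputable def bridge (q : Traj X N → ℝ) (a b : X) (v : Fin N → X) : ℝ :=
  q (glue a v b) / endMarg q a b

/-- A process is Markov if it factorizes through its one-step transitions. -/
def IsMarkov (q : Traj X N → ℝ) : Prop :=
  ∀ ω : Traj X N,
    q ω = timeMarg q 0 (ω 0) * ∏ n : Fin (N + 1), transP q n (ω n.castSucc) (ω n.succ)

/-- A process `q` is reciprocal w.r.t. a full-support reference process `qref` if its
bridges coincide with those of `qref` wherever they are defined. -/
def IsReciprocal (qref q : Traj X N → ℝ) : Prop :=
  ∀ a b : X, 0 < endMarg q a b → ∀ v : Fin N → X, bridge q a b v = bridge qref a b v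

/-- Reciprocal projection of `q` w.r.t. `qref`:
`proj_R(q)(x_0, x_in, x_1) = qref(x_in | x_0, x_1) · q(x_0, x_1)`. -/
noncomputable def projR (qref q : Traj X N → ℝ) (ω : Traj X N) : ℝ :=
  (qref ω / endMarg qref (ω 0) (ω (Fin.last (N + 1)))) *
    endMarg q (ω 0) (ω (Fin.last (N + 1)))

/-- Markovian projection of `q`:
`proj_M(q)(x_0, x_in, x_1) = q(x_0) ∏_{n=1}^{N+1} q(x_{t_n} | x_{t_{n-1}})`. -/
noncomputable def projM (q : Traj X N → ℝ) (ω : Traj X N) : ℝ :=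
  timeMarg q 0 (ω 0) * ∏ n : Fin (N + 1), transP q n (ω n.castSucc) (ω n.succ)

/-- Marginal of the bridge of `q` at time index `i`:
`q(x_{t_i} = y | x_0 = a, x_1 = b)`. -/
noncomputable def bridgeAt (q : Traj X N → ℝ) (i : Fin (N + 2)) (y a b : X) : ℝ :=
  (∑ ω : Traj X N, if ω 0 = a ∧ ω i = y ∧ ω (Fin.last (N + 1)) = b then q ω else 0) /
    endMarg q a b

/-- Conditional transition given the terminal point:
`q(x_{t_n} = z | x_{t_{n-1}} = y, x_1 = b)` for the step from time index `n` to `n+1`. -/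
noncomputable def condTrans (q : Traj X N → ℝ) (n : Fin (N + 1)) (y z b : X) : ℝ :=
  (∑ ω : Traj X N,
      if ω n.castSucc = y ∧ ω n.succ = z ∧ ω (Fin.last (N + 1)) = b then q ω else 0) /
    (∑ ω : Traj X N, if ω n.castSucc = y ∧ ω (Fin.last (N + 1)) = b then q ω else 0)

/-- Membership in `Π_N(p_0, p_1)`: a process with prescribed marginals at times 0 and 1. -/
def InPiN (p0 p1 : X → ℝ) (q : Traj X N → ℝ) : Prop :=
  IsPMF q ∧ (∀ x, timeMarg q 0 x = p0 x) ∧ (∀ x, timeMarg q (Fin.last (N + 1)) x = p1 x)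

/-- Membership in `Π(p_0, p_1)`: couplings on `X²` with prescribed marginals. -/
def InPi2 (p0 p1 : X → ℝ) (s : X × X → ℝ) : Prop :=
  IsPMF s ∧ (∀ a, ∑ b, s (a, b) = p0 a) ∧ (∀ b, ∑ a, s (a, b) = p1 b)


/- ===== auxiliary machinery ===== -/

set_option linter.unusedSectionVars false

section Split
variable {X : Type*} [Fintype X] [DecidableEq X]

/-- Extend a finite tuple to a function on ℕ (clamping). -/
def extF {M : ℕ} (ω : Fin (M+1) → X) (t : ℕ) : X := ω ⟨min t M, by omega⟩

lemma extF_eq {M : ℕ} (ω : Fin (M+1) → X) {t : ℕ} (h : t ≤ M) :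
    extF ω t = ω ⟨t, by omega⟩ := by
  unfold extF; congr 1; exact Fin.ext (by simp [Nat.min_eq_left h])

lemma prod_range_split (F : ℕ → ℝ) {j M : ℕ} (hj : j ≤ M) :
    ∏ t ∈ Finset.range M, F t
      = (∏ t ∈ Finset.range j, F t) * ∏ s ∈ Finset.range (M-j), F (j+s) := by
  obtain ⟨d, rfl⟩ : ∃ d, M = j + d := ⟨M - j, by omega⟩
  have h : j + d - j = d := by omega
  rw [h, Finset.prod_range_add]

/-- Split a trajectory at position `j`. -/
def trajEquiv (X : Type*) (M j : ℕ) (hj : j ≤ M) :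
    ((Fin (j+1) → X) × (Fin (M-j) → X)) ≃ (Fin (M+1) → X) where
  toFun lr i := if h : (i:ℕ) ≤ j then lr.1 ⟨i, by omega⟩ else lr.2 ⟨(i:ℕ) - (j+1), by omega⟩
  invFun ω := (fun i => ω ⟨i, by omega⟩, fun s => ω ⟨j+1+s, by omega⟩)
  left_inv lr := by
    ext i
    · have h : ((⟨(i:ℕ), by omega⟩ : Fin (M+1)) : ℕ) ≤ j := by
        show (i:ℕ) ≤ j; omega
      simp only [dif_pos h]
    · have h : ¬ ((⟨j+1+(i:ℕ), by omega⟩ : Fin (M+1)) : ℕ) ≤ j := by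
        show ¬ j+1+(i:ℕ) ≤ j; omega
      simp only [dif_neg h]
      exact congrArg lr.2 (Fin.ext (show j+1+(i:ℕ)-(j+1) = (i:ℕ) by omega))
  right_inv ω := by
    funext i
    by_cases h : (i:ℕ) ≤ j
    · simp only [dif_pos h]
    · simp only [dif_neg h]
      exact congrArg ω (Fin.ext (show j+1+((i:ℕ)-(j+1)) = (i:ℕ) by omega))

end Split

section Split2
variable {X : Type*} [Fintype X] [DecidableEq X]

/-- Right part of a split trajectory, with the junction value `y` prepended. -/
def rYd {X : Type*} (y : X) (Mj : ℕ) (r : Fin Mj → X) (s : ℕ) : X :=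
  if h : 1 ≤ s ∧ s ≤ Mj then r ⟨s-1, by omega⟩ else y

lemma rYd_zero {X : Type*} (y : X) (Mj : ℕ) (r : Fin Mj → X) : rYd y Mj r 0 = y := by
  rw [rYd, dif_neg (by omega)]

lemma rYd_pos {X : Type*} (y : X) (Mj : ℕ) (r : Fin Mj → X) {s : ℕ} (h1 : 1 ≤ s) (h2 : s ≤ Mj) :
    rYd y Mj r s = r ⟨s-1, by omega⟩ := dif_pos ⟨h1, h2⟩

/-- Weight of the left part of a split trajectory. -/
def UUd {X : Type*} (p : X → ℝ) (K : ℕ → X → X → ℝ) (j : ℕ) (l : Fin (j+1) → X) : ℝ :=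
  p (l 0) * ∏ t ∈ Finset.range j, K t (l ⟨min t j, by omega⟩) (l ⟨min (t+1) j, by omega⟩)

/-- Weight of the right part of a split trajectory. -/
def VVd {X : Type*} (K : ℕ → X → X → ℝ) (y : X) (j Mj : ℕ) (r : Fin Mj → X) : ℝ :=
  ∏ s ∈ Finset.range Mj, K (j+s) (rYd y Mj r s) (rYd y Mj r (s+1))

lemma markov_split {M : ℕ} (u : (Fin (M+1) → X) → ℝ) (p : X → ℝ) (K : ℕ → X → X → ℝ)
    (hu : ∀ ω, u ω = p (ω 0) * ∏ t ∈ Finset.range M, K t (extF ω t) (extF ω (t+1)))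
    {j : ℕ} (hj : j ≤ M) (y : X) (f g : (Fin (M+1) → X) → ℝ)
    (hf : ∀ ω ω' : Fin (M+1) → X, (∀ i : Fin (M+1), (i:ℕ) ≤ j → ω i = ω' i) → f ω = f ω')
    (hg : ∀ ω ω' : Fin (M+1) → X, (∀ i : Fin (M+1), j ≤ (i:ℕ) → ω i = ω' i) → g ω = g ω') :
    (∑ ω : Fin (M+1) → X, if extF ω j = y then u ω * (f ω * g ω) else 0) *
      (∑ ω : Fin (M+1) → X, if extF ω j = y then u ω else 0) =
    (∑ ω : Fin (M+1) → X, if extF ω j = y then u ω * f ω else 0) *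
      (∑ ω : Fin (M+1) → X, if extF ω j = y then u ω * g ω else 0) := by
  set Φ := trajEquiv X M j hj with hΦdef
  have hΦapp : ∀ (l : Fin (j+1) → X) (r : Fin (M-j) → X) (i : Fin (M+1)),
      Φ (l, r) i = if h : (i:ℕ) ≤ j then l ⟨i, by omega⟩ else r ⟨(i:ℕ) - (j+1), by omega⟩ := by
    intro l r i
    rfl
  have hL : ∀ (l : Fin (j+1) → X) (r : Fin (M-j) → X) (t : ℕ) (ht : t ≤ j),
      extF (Φ (l, r)) t = l ⟨t, by omega⟩ := by
    intro l r t ht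
    rw [extF_eq _ (le_trans ht hj), hΦapp]
    rw [dif_pos (show ((⟨t, by omega⟩ : Fin (M+1)):ℕ) ≤ j from ht)]
  have hR : ∀ (l : Fin (j+1) → X) (r : Fin (M-j) → X) (t : ℕ) (ht1 : j < t) (ht2 : t ≤ M),
      extF (Φ (l, r)) t = r ⟨t - (j+1), by omega⟩ := by
    intro l r t ht1 ht2
    rw [extF_eq _ ht2, hΦapp]
    rw [dif_neg (show ¬ ((⟨t, by omega⟩ : Fin (M+1)):ℕ) ≤ j from by simpa using ht1)]
  have hW : ∀ (l : Fin (j+1) → X) (r : Fin (M-j) → X), l ⟨j, by omega⟩ = y →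
      u (Φ (l, r)) = UUd p K j l * VVd K y j (M-j) r := by
    intro l r hl
    have h0 : Φ (l, r) 0 = l 0 := by
      rw [hΦapp, dif_pos (show ((0 : Fin (M+1)):ℕ) ≤ j from by simp)]
      exact congrArg l (Fin.ext (by simp))
    rw [hu, prod_range_split _ hj, h0, UUd, VVd, ← mul_assoc]
    congr 1
    · congr 1
      apply Finset.prod_congr rfl
      intro t ht
      rw [Finset.mem_range] at ht
      rw [hL l r t (by omega), hL l r (t+1) (by omega)]
      congr 2 <;> exact Fin.ext (by simp <;> omega)
    · apply Finset.prod_congr rfl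
      intro s hs
      rw [Finset.mem_range] at hs
      have harg2 : extF (Φ (l, r)) (j+s+1) = rYd y (M-j) r (s+1) := by
        rw [hR l r (j+s+1) (by omega) (by omega), rYd_pos y (M-j) r (by omega) (by omega)]
        congr 1
        exact Fin.ext (by simp <;> omega)
      rcases Nat.eq_zero_or_pos s with h|h
      · subst h
        have harg1 : extF (Φ (l, r)) (j+0) = rYd y (M-j) r 0 := by
          rw [show j + 0 = j from rfl, hL l r j le_rfl, rYd_zero]
          exact hl
        rw [harg1, harg2]
      · have harg1 : extF (Φ (l, r)) (j+s) = rYd y (M-j) r s := by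
          rw [hR l r (j+s) (by omega) (by omega), rYd_pos y (M-j) r (by omega) (by omega)]
          congr 1
          exact Fin.ext (by simp <;> omega)
        rw [harg1, harg2]
  have hcond : ∀ (l : Fin (j+1) → X) (r : Fin (M-j) → X),
      extF (Φ (l, r)) j = l ⟨j, by omega⟩ := fun l r => hL l r j le_rfl
  have key : ∀ (φ : (Fin (M+1) → X) → ℝ) (F : (Fin (j+1) → X) → ℝ) (G : (Fin (M-j) → X) → ℝ),
      (∀ l r, l ⟨j, by omega⟩ = y → φ (Φ (l, r)) = F l * G r) →
      (∑ ω : Fin (M+1) → X, if extF ω j = y then u ω * φ ω else 0)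
        = (∑ l : Fin (j+1) → X, if l ⟨j, by omega⟩ = y then UUd p K j l * F l else 0) *
          (∑ r : Fin (M-j) → X, VVd K y j (M-j) r * G r) := by
    intro φ F G hφ
    rw [← Equiv.sum_comp Φ (fun ω => if extF ω j = y then u ω * φ ω else 0)]
    rw [Fintype.sum_prod_type]
    rw [Finset.sum_mul]
    apply Finset.sum_congr rfl
    intro l _
    by_cases hl : l ⟨j, by omega⟩ = y
    · rw [if_pos hl, Finset.mul_sum]
      apply Finset.sum_congr rfl
      intro r _
      rw [if_pos (by rw [hcond l r]; exact hl), hW l r hl, hφ l r hl]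
      ring
    · rw [if_neg hl, zero_mul]
      apply Finset.sum_eq_zero
      intro r _
      rw [if_neg (by rw [hcond l r]; exact hl)]
  set fl : (Fin (j+1) → X) → ℝ := fun l => f (Φ (l, fun _ => y)) with hfl
  set gr : (Fin (M-j) → X) → ℝ := fun r => g (Φ (fun _ => y, r)) with hgr
  have hff : ∀ (l : Fin (j+1) → X) (r : Fin (M-j) → X), f (Φ (l, r)) = fl l := by
    intro l r
    apply hf
    intro i hi
    rw [hΦapp, hΦapp, dif_pos hi, dif_pos hi]
  have hgg : ∀ (l : Fin (j+1) → X) (r : Fin (M-j) → X), l ⟨j, by omega⟩ = y →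
      g (Φ (l, r)) = gr r := by
    intro l r hl
    apply hg
    intro i hi
    rw [hΦapp, hΦapp]
    by_cases hij : (i:ℕ) ≤ j
    · rw [dif_pos hij, dif_pos hij]
      have : (⟨(i:ℕ), by omega⟩ : Fin (j+1)) = ⟨j, by omega⟩ := Fin.ext (by simp <;> omega)
      rw [this, hl]
    · rw [dif_neg hij, dif_neg hij]
  have k1 := key (fun ω => f ω * g ω) fl gr
    (fun l r hl => by rw [hff l r, hgg l r hl])
  have k2 := key (fun _ => (1:ℝ)) (fun _ => 1) (fun _ => 1) (fun l r hl => by norm_num)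
  have k3 := key f fl (fun _ => 1) (fun l r hl => by simp only [mul_one]; exact hff l r)
  have k4 := key g (fun _ => 1) gr (fun l r hl => by simp only [one_mul]; exact hgg l r hl)
  have e2 : (∑ ω : Fin (M+1) → X, if extF ω j = y then u ω else 0)
      = (∑ ω : Fin (M+1) → X, if extF ω j = y then u ω * (fun _ => (1:ℝ)) ω else 0) := by
    simp
  rw [k1, e2, k2, k3, k4]
  ring
end Split2

abbrev Traj' (X : Type*) (N : ℕ) := Fin (N + 2) → X

section Apply
variable {X : Type*} [Fintype X] [DecidableEq X] {N : ℕ}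

lemma markov_split_fin (u : Traj' X N → ℝ) (p : X → ℝ) (K : ℕ → X → X → ℝ)
    (hu : ∀ ω : Traj' X N, u ω = p (ω 0) * ∏ t ∈ Finset.range (N+1), K t (extF ω t) (extF ω (t+1)))
    (i : Fin (N+2)) (y : X) (f g : Traj' X N → ℝ)
    (hf : ∀ ω ω' : Traj' X N, (∀ t : Fin (N+2), t ≤ i → ω t = ω' t) → f ω = f ω')
    (hg : ∀ ω ω' : Traj' X N, (∀ t : Fin (N+2), i ≤ t → ω t = ω' t) → g ω = g ω') :
    (∑ ω : Traj' X N, if ω i = y then u ω * (f ω * g ω) else 0) *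
      (∑ ω : Traj' X N, if ω i = y then u ω else 0) =
    (∑ ω : Traj' X N, if ω i = y then u ω * f ω else 0) *
      (∑ ω : Traj' X N, if ω i = y then u ω * g ω else 0) := by
  have hext : ∀ ω : Traj' X N, extF (M := N+1) ω (i : ℕ) = ω i := by
    intro ω
    rw [extF_eq ω (show (i:ℕ) ≤ N+1 by omega)]
  have H := markov_split u p K hu (show (i:ℕ) ≤ N+1 by omega) y f g
    (fun ω ω' h => hf ω ω' (fun t ht => h t (by rw [Fin.le_def] at ht; exact ht)))
    (fun ω ω' h => hg ω ω' (fun t ht => h t (by rw [Fin.le_def] at ht; exact ht)))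
  simpa only [hext] using H

lemma sum_fiber {κ : Type*} [Fintype κ] [DecidableEq κ] (u : Traj' X N → ℝ)
    (c : Traj' X N → κ) (F : κ → ℝ) :
    ∑ ω : Traj' X N, u ω * F (c ω)
      = ∑ t : κ, F t * ∑ ω : Traj' X N, (if c ω = t then u ω else 0) := by
  have h1 : ∀ ω : Traj' X N, u ω * F (c ω)
      = ∑ t : κ, (if c ω = t then F t * u ω else 0) := by
    intro ω
    rw [Finset.sum_ite_eq Finset.univ (c ω) (fun t => F t * u ω), if_pos (Finset.mem_univ _)]
    ring
  rw [Finset.sum_congr rfl (fun ω _ => h1 ω), Finset.sum_comm]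
  apply Finset.sum_congr rfl
  intro t _
  rw [Finset.mul_sum]
  apply Finset.sum_congr rfl
  intro ω _
  split_ifs with h
  · rfl
  · rw [mul_zero]

lemma sum_ite_pos_of (u : Traj' X N → ℝ) (hu : ∀ ω, 0 < u ω) (P : Traj' X N → Prop)
    [DecidablePred P] (h : ∃ ω, P ω) :
    0 < ∑ ω : Traj' X N, if P ω then u ω else 0 := by
  obtain ⟨ω0, h0⟩ := h
  apply Finset.sum_pos'
  · intro ω _
    split_ifs
    · exact le_of_lt (hu ω)
    · exact le_rfl
  · exact ⟨ω0, Finset.mem_univ _, by rw [if_pos h0]; exact hu ω0⟩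

lemma sum_ite_mul_const (P : Traj' X N → Prop) [DecidablePred P] (c : ℝ) (u v : Traj' X N → ℝ)
    (h : ∀ ω, P ω → u ω = c * v ω) :
    (∑ ω : Traj' X N, if P ω then u ω else 0) = c * ∑ ω : Traj' X N, if P ω then v ω else 0 := by
  rw [Finset.mul_sum]
  apply Finset.sum_congr rfl
  intro ω _
  split_ifs with h'
  · exact h ω h'
  · rw [mul_zero]

end Apply


section Aux
variable {X : Type*} [Fintype X] [DecidableEq X] {N : ℕ}

/-- `Σ_{ω_i = y, ω_last = b} r(ω)`. -/
noncomputable def StS (r : Traj X N → ℝ) (i : Fin (N+2)) (y b : X) : ℝ :=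
  ∑ ω : Traj X N, if ω i = y ∧ ω (Fin.last (N+1)) = b then r ω else 0

/-- `Σ_{ω_0 = a, ω_i = y, ω_last = b} r(ω)`. -/
noncomputable def S3 (r : Traj X N → ℝ) (a : X) (i : Fin (N+2)) (y b : X) : ℝ :=
  ∑ ω : Traj X N, if ω 0 = a ∧ ω i = y ∧ ω (Fin.last (N+1)) = b then r ω else 0

/-- `Σ_{ω_n = y, ω_{n+1} = z, ω_last = b} r(ω)`. -/
noncomputable def SpS (r : Traj X N → ℝ) (n : Fin (N+1)) (y z b : X) : ℝ :=
  ∑ ω : Traj X N, if ω n.castSucc = y ∧ ω n.succ = z ∧ ω (Fin.last (N+1)) = b then r ω else 0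

/-- `Σ_{ω_0 = a, ω_i = y} r(ω)`. -/
noncomputable def G2 (r : Traj X N → ℝ) (a : X) (i : Fin (N+2)) (y : X) : ℝ :=
  ∑ ω : Traj X N, if ω 0 = a ∧ ω i = y then r ω else 0

/-- `Σ_{ω_0 = a, ω_n = y, ω_{n+1} = z, ω_last = b} r(ω)`. -/
noncomputable def A4 (r : Traj X N → ℝ) (a : X) (n : Fin (N+1)) (y z b : X) : ℝ :=
  ∑ ω : Traj X N, if ω 0 = a ∧ ω n.castSucc = y ∧ ω n.succ = z ∧ ω (Fin.last (N+1)) = b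
    then r ω else 0

/-- Transition kernel of `r` as a function of a natural-number time index. -/
noncomputable def Kref (r : Traj X N → ℝ) (t : ℕ) (y z : X) : ℝ :=
  if h : t < N+1 then transP r ⟨t, h⟩ y z else 1

lemma Kref_lt (r : Traj X N → ℝ) {t : ℕ} (h : t < N+1) (y z : X) :
    Kref r t y z = transP r ⟨t, h⟩ y z := dif_pos h

lemma condTrans_def (r : Traj X N → ℝ) (n : Fin (N+1)) (y z b : X) :
    condTrans r n y z b = SpS r n y z b / StS r n.castSucc y b := rfl

lemma bridgeAt_def (r : Traj X N → ℝ) (i : Fin (N+2)) (y a b : X) :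
    bridgeAt r i y a b = S3 r a i y b / endMarg r a b := rfl

lemma transP_def (r : Traj X N → ℝ) (n : Fin (N+1)) (y z : X) :
    transP r n y z = pairMarg r n y z / timeMarg r n.castSucc y := rfl

lemma ite_ind_mul (P C Q : Prop) [Decidable P] [Decidable C] [Decidable Q] (v : ℝ) :
    (if C then v * ((if P then (1:ℝ) else 0) * (if Q then (1:ℝ) else 0)) else 0)
      = if P ∧ C ∧ Q then v else 0 := by
  by_cases hP : P <;> by_cases hC : C <;> by_cases hQ : Q <;> simp [hP, hC, hQ]

lemma ite_ind_mul_left (P C : Prop) [Decidable P] [Decidable C] (v : ℝ) :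
    (if C then v * (if P then (1:ℝ) else 0) else 0) = if P ∧ C then v else 0 := by
  by_cases hP : P <;> by_cases hC : C <;> simp [hP, hC]

lemma ite_ind_mul_right (C Q : Prop) [Decidable C] [Decidable Q] (v : ℝ) :
    (if C then v * (if Q then (1:ℝ) else 0) else 0) = if C ∧ Q then v else 0 := by
  by_cases hC : C <;> by_cases hQ : Q <;> simp [hC, hQ]

lemma sum3_comm {Y : Type*} [Fintype Y] (f : Y → Y → Y → ℝ) :
    ∑ y : Y, ∑ z : Y, ∑ b : Y, f y z b = ∑ b : Y, ∑ y : Y, ∑ z : Y, f y z b := by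
  calc ∑ y : Y, ∑ z : Y, ∑ b : Y, f y z b
      = ∑ y : Y, ∑ b : Y, ∑ z : Y, f y z b :=
        Finset.sum_congr rfl (fun y _ => Finset.sum_comm)
    _ = ∑ b : Y, ∑ y : Y, ∑ z : Y, f y z b := Finset.sum_comm

end Aux
/-- KL decomposition against a Markov process. For `q` reciprocal
w.r.t. the full-support Markov reference `q^ref`, with full-support endpoint coupling,
and any Markov `m` with full-support transitions and `m(x_0) = q(x_0)`:
`KL(q ‖ m) = Σ_{n=1}^{N} E_{q(x_0,x_1)} E_{q^ref(x_{t_{n-1}}|x_0,x_1)}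
  KL(q^ref(x_{t_n}|x_{t_{n-1}},x_1) ‖ m(x_{t_n}|x_{t_{n-1}}))
  − E_{q(x_0,x_1)} E_{q^ref(x_{t_N}|x_0,x_1)}[log m(x_1|x_{t_N})]
  + E_{q(x_0,x_1)}[log q(x_1|x_0)]`
(by convention `x_{t_0} := x_0`, so for `n = 1` the inner expectation is deterministic). -/
theorem kl_decomposition_markov
    {X : Type*} [Fintype X] [DecidableEq X] [Nonempty X] {N : ℕ} (hN : 1 ≤ N)
    (qref : Traj X N → ℝ) (hqref : IsPMF qref) (hqrefpos : ∀ ω, 0 < qref ω)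
    (hqrefM : IsMarkov qref)
    (q : Traj X N → ℝ) (hq : IsPMF q) (hqR : IsReciprocal qref q)
    (hqend : ∀ a b : X, 0 < endMarg q a b)
    (m : Traj X N → ℝ) (hm : IsPMF m) (hmM : IsMarkov m)
    (hmpos : ∀ (n : Fin (N + 1)) (y z : X), 0 < transP m n y z)
    (hm0 : ∀ x, timeMarg m 0 x = timeMarg q 0 x) :
    KLd q m =
      (∑ k : Fin N, ∑ a : X, ∑ b : X, endMarg q a b *
          ∑ y : X, bridgeAt qref k.castSucc.castSucc y a b *
            KLd (fun z : X => condTrans qref k.castSucc y z b)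
                (fun z : X => transP m k.castSucc y z)) -
        (∑ a : X, ∑ b : X, endMarg q a b *
          ∑ y : X, bridgeAt qref ((Fin.last N).castSucc) y a b *
            Real.log (transP m (Fin.last N) y b)) +
        ∑ a : X, ∑ b : X, endMarg q a b *
          Real.log (endMarg q a b / timeMarg q 0 a) := by
  classical
  have hlastne : (Fin.last (N+1) : Fin (N+2)) ≠ 0 := by
    apply Fin.ne_of_val_ne
    simp only [Fin.val_last, Fin.val_zero]
    omega
  have hEpos : ∀ a b : X, 0 < endMarg qref a b := by
    intro a b
    exact sum_ite_pos_of qref hqrefpos _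
      ⟨fun t => if t = 0 then a else b, by simp, by simp [hlastne]⟩
  have hTMpos : ∀ (r : Traj X N → ℝ), (∀ ω, 0 < r ω) → ∀ (i : Fin (N+2)) (y : X),
      0 < timeMarg r i y := by
    intro r hr i y
    exact sum_ite_pos_of r hr _ ⟨fun _ => y, rfl⟩
  have hStpos : ∀ (i : Fin (N+2)), (i:ℕ) < N+1 → ∀ (y b : X), 0 < StS qref i y b := by
    intro i hi y b
    have hne1 : (Fin.last (N+1) : Fin (N+2)) ≠ i := by
      apply Fin.ne_of_val_ne
      show N+1 ≠ (i:ℕ)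
      omega
    exact sum_ite_pos_of qref hqrefpos _
      ⟨fun t => if t = i then y else b, by simp, by simp [hne1]⟩
  have hSppos : ∀ (n : Fin (N+1)), (n:ℕ) < N → ∀ (y z b : X), 0 < SpS qref n y z b := by
    intro n hn y z b
    have h21 : (n.succ : Fin (N+2)) ≠ n.castSucc := by
      apply Fin.ne_of_val_ne
      show (n:ℕ)+1 ≠ (n:ℕ)
      omega
    have h31 : (Fin.last (N+1) : Fin (N+2)) ≠ n.castSucc := by
      apply Fin.ne_of_val_ne
      show N+1 ≠ (n:ℕ)
      omega
    have h32 : (Fin.last (N+1) : Fin (N+2)) ≠ n.succ := by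
      apply Fin.ne_of_val_ne
      show N+1 ≠ (n:ℕ)+1
      omega
    exact sum_ite_pos_of qref hqrefpos _
      ⟨fun t => if t = n.castSucc then y else if t = n.succ then z else b,
        by simp, by simp [h21], by simp [h31, h32]⟩
  have hPairpos : ∀ (n : Fin (N+1)) (y z : X), 0 < pairMarg qref n y z := by
    intro n y z
    have h21 : (n.succ : Fin (N+2)) ≠ n.castSucc := by
      apply Fin.ne_of_val_ne
      show (n:ℕ)+1 ≠ (n:ℕ)
      omega
    exact sum_ite_pos_of qref hqrefpos _
      ⟨fun t => if t = n.castSucc then y else z, by simp, by simp [h21]⟩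
  have hTrefpos : ∀ (n : Fin (N+1)) (y z : X), 0 < transP qref n y z :=
    fun n y z => div_pos (hPairpos n y z) (hTMpos qref hqrefpos _ _)
  -- reconstruction of trajectories from glue
  have hglue : ∀ ω : Traj X N,
      glue (ω 0) (fun i => ω i.succ.castSucc) (ω (Fin.last (N+1))) = ω := by
    intro ω
    funext j
    refine Fin.cases ?_ ?_ j
    · simp only [glue, Fin.cons_zero]
    · intro i
      simp only [glue, Fin.cons_succ]
      refine Fin.lastCases ?_ ?_ i
      · rw [Fin.snoc_last, Fin.succ_last]
      · intro k
        rw [Fin.snoc_castSucc]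
        exact congrArg ω (Fin.succ_castSucc k).symm
  -- the reciprocity formula
  have hqrec : ∀ ω : Traj X N, q ω
      = qref ω * (endMarg q (ω 0) (ω (Fin.last (N+1))) / endMarg qref (ω 0) (ω (Fin.last (N+1)))) := by
    intro ω
    have h := hqR (ω 0) (ω (Fin.last (N+1))) (hqend _ _) (fun i => ω i.succ.castSucc)
    rw [bridge, bridge, hglue ω] at h
    have he := hqend (ω 0) (ω (Fin.last (N+1)))
    have hEp := hEpos (ω 0) (ω (Fin.last (N+1)))
    rw [div_eq_div_iff (ne_of_gt he) (ne_of_gt hEp)] at h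
    field_simp
    linear_combination h
  have hqpos : ∀ ω : Traj X N, 0 < q ω := by
    intro ω
    rw [hqrec ω]
    exact mul_pos (hqrefpos ω) (div_pos (hqend _ _) (hEpos _ _))
  -- the Markov reference process in "range product" form
  have hu : ∀ ω : Traj X N, qref ω = timeMarg qref 0 (ω 0) *
      ∏ t ∈ Finset.range (N+1), Kref qref t (extF ω t) (extF ω (t+1)) := by
    intro ω
    rw [hqrefM ω]
    congr 1
    rw [← Fin.prod_univ_eq_prod_range
      (fun t => Kref qref t (extF ω t) (extF ω (t+1))) (N+1)]
    apply Finset.prod_congr rfl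
    intro n _
    rw [Kref_lt qref n.isLt,
      extF_eq ω (show (n:ℕ) ≤ N+1 by omega), extF_eq ω (show (n:ℕ)+1 ≤ N+1 by omega)]
    rfl
  have hcsle : ∀ n : Fin (N+1), (n.castSucc : Fin (N+2)) ≤ n.succ := by
    intro n
    rw [Fin.le_def]
    show (n:ℕ) ≤ (n:ℕ)+1
    omega
  -- splitting identity 1
  have split1 : ∀ (n : Fin (N+1)) (a y z b : X),
      A4 qref a n y z b * timeMarg qref n.castSucc y
        = G2 qref a n.castSucc y * SpS qref n y z b := by
    intro n a y z b
    have H := markov_split_fin qref (timeMarg qref 0) (Kref qref) hu n.castSucc y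
      (fun ω => if ω 0 = a then (1:ℝ) else 0)
      (fun ω => if ω n.succ = z ∧ ω (Fin.last (N+1)) = b then (1:ℝ) else 0)
      (fun ω ω' h => by simp only [h 0 (Fin.zero_le _)])
      (fun ω ω' h => by simp only [h n.succ (hcsle n), h (Fin.last (N+1)) (Fin.le_last _)])
    have e1 : (∑ ω : Traj X N, if ω n.castSucc = y then qref ω *
        ((if ω 0 = a then (1:ℝ) else 0) *
          (if ω n.succ = z ∧ ω (Fin.last (N+1)) = b then (1:ℝ) else 0)) else 0)
        = A4 qref a n y z b := by
      unfold A4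
      exact Finset.sum_congr rfl (fun ω _ => ite_ind_mul _ _ _ _)
    have e2 : (∑ ω : Traj X N, if ω n.castSucc = y then qref ω *
        (if ω 0 = a then (1:ℝ) else 0) else 0) = G2 qref a n.castSucc y := by
      unfold G2
      exact Finset.sum_congr rfl (fun ω _ => ite_ind_mul_left _ _ _)
    have e3 : (∑ ω : Traj X N, if ω n.castSucc = y then qref ω *
        (if ω n.succ = z ∧ ω (Fin.last (N+1)) = b then (1:ℝ) else 0) else 0)
        = SpS qref n y z b := by
      unfold SpS
      exact Finset.sum_congr rfl (fun ω _ => ite_ind_mul_right _ _ _)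
    rw [← e1, ← e2, ← e3]
    exact H
  -- splitting identity 2
  have split2 : ∀ (i : Fin (N+2)) (a y b : X),
      S3 qref a i y b * timeMarg qref i y = G2 qref a i y * StS qref i y b := by
    intro i a y b
    have H := markov_split_fin qref (timeMarg qref 0) (Kref qref) hu i y
      (fun ω => if ω 0 = a then (1:ℝ) else 0)
      (fun ω => if ω (Fin.last (N+1)) = b then (1:ℝ) else 0)
      (fun ω ω' h => by simp only [h 0 (Fin.zero_le _)])
      (fun ω ω' h => by simp only [h (Fin.last (N+1)) (Fin.le_last _)])
    have e1 : (∑ ω : Traj X N, if ω i = y then qref ω *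
        ((if ω 0 = a then (1:ℝ) else 0) *
          (if ω (Fin.last (N+1)) = b then (1:ℝ) else 0)) else 0)
        = S3 qref a i y b := by
      unfold S3
      exact Finset.sum_congr rfl (fun ω _ => ite_ind_mul _ _ _ _)
    have e2 : (∑ ω : Traj X N, if ω i = y then qref ω *
        (if ω 0 = a then (1:ℝ) else 0) else 0) = G2 qref a i y := by
      unfold G2
      exact Finset.sum_congr rfl (fun ω _ => ite_ind_mul_left _ _ _)
    have e3 : (∑ ω : Traj X N, if ω i = y then qref ω *
        (if ω (Fin.last (N+1)) = b then (1:ℝ) else 0) else 0) = StS qref i y b := by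
      unfold StS
      exact Finset.sum_congr rfl (fun ω _ => ite_ind_mul_right _ _ _)
    rw [← e1, ← e2, ← e3]
    exact H
  -- splitting identity 3
  have split3 : ∀ (n : Fin (N+1)) (y z b : X),
      SpS qref n y z b * timeMarg qref n.succ z
        = pairMarg qref n y z * StS qref n.succ z b := by
    intro n y z b
    have H := markov_split_fin qref (timeMarg qref 0) (Kref qref) hu n.succ z
      (fun ω => if ω n.castSucc = y then (1:ℝ) else 0)
      (fun ω => if ω (Fin.last (N+1)) = b then (1:ℝ) else 0)
      (fun ω ω' h => by simp only [h n.castSucc (hcsle n)])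
      (fun ω ω' h => by simp only [h (Fin.last (N+1)) (Fin.le_last _)])
    have e1 : (∑ ω : Traj X N, if ω n.succ = z then qref ω *
        ((if ω n.castSucc = y then (1:ℝ) else 0) *
          (if ω (Fin.last (N+1)) = b then (1:ℝ) else 0)) else 0)
        = SpS qref n y z b := by
      unfold SpS
      exact Finset.sum_congr rfl (fun ω _ => ite_ind_mul _ _ _ _)
    have e2 : (∑ ω : Traj X N, if ω n.succ = z then qref ω *
        (if ω n.castSucc = y then (1:ℝ) else 0) else 0) = pairMarg qref n y z := by
      unfold pairMarg
      exact Finset.sum_congr rfl (fun ω _ => ite_ind_mul_left _ _ _)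
    have e3 : (∑ ω : Traj X N, if ω n.succ = z then qref ω *
        (if ω (Fin.last (N+1)) = b then (1:ℝ) else 0) else 0) = StS qref n.succ z b := by
      unfold StS
      exact Finset.sum_congr rfl (fun ω _ => ite_ind_mul_right _ _ _)
    rw [← e1, ← e2, ← e3]
    exact H
  -- positivity of conditional transitions
  have hCpos : ∀ (n : Fin (N+1)), (n:ℕ) < N → ∀ (y z b : X), 0 < condTrans qref n y z b := by
    intro n hn y z b
    rw [condTrans_def]
    exact div_pos (hSppos n hn y z b)
      (hStpos n.castSucc (by simp only [Fin.coe_castSucc]; omega) y b)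
  have hStlast : ∀ b : X,
      StS qref (Fin.last (N+1)) b b = timeMarg qref (Fin.last (N+1)) b := by
    intro b
    unfold StS timeMarg
    exact Finset.sum_congr rfl (fun ω _ => by simp only [and_self])
  -- bridge factorization of qref
  have step3 : ∀ ω : Traj X N, qref ω
      = endMarg qref (ω 0) (ω (Fin.last (N+1))) *
        ∏ k : Fin N, condTrans qref k.castSucc (ω k.castSucc.castSucc) (ω k.succ.castSucc)
          (ω (Fin.last (N+1))) := by
    intro ω
    have p1 : ∀ i : Fin (N+2), (0:ℝ) < timeMarg qref i (ω i) :=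
      fun i => hTMpos qref hqrefpos _ _
    have h3a : ∀ n : Fin (N+1),
        condTrans qref n (ω n.castSucc) (ω n.succ) (ω (Fin.last (N+1))) *
          (StS qref n.castSucc (ω n.castSucc) (ω (Fin.last (N+1)))
            / timeMarg qref n.castSucc (ω n.castSucc))
        = transP qref n (ω n.castSucc) (ω n.succ) *
          (StS qref n.succ (ω n.succ) (ω (Fin.last (N+1)))
            / timeMarg qref n.succ (ω n.succ)) := by
      intro n
      have h := split3 n (ω n.castSucc) (ω n.succ) (ω (Fin.last (N+1)))
      have q1 := p1 n.castSucc
      have q2 := p1 n.succ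
      have q3 : (0:ℝ) < StS qref n.castSucc (ω n.castSucc) (ω (Fin.last (N+1))) :=
        hStpos _ (by simp only [Fin.coe_castSucc]; omega) _ _
      rw [condTrans_def, transP_def, div_mul_div_comm, div_mul_div_comm,
        div_eq_div_iff (by positivity) (by positivity)]
      linear_combination (StS qref n.castSucc (ω n.castSucc) (ω (Fin.last (N+1)))
        * timeMarg qref n.castSucc (ω n.castSucc)) * h
    have h3b := Finset.prod_congr rfl
      (fun n (_ : n ∈ (Finset.univ : Finset (Fin (N+1)))) => h3a n)
    rw [Finset.prod_mul_distrib, Finset.prod_mul_distrib] at h3b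
    have hHlast : StS qref (Fin.last (N+1)) (ω (Fin.last (N+1))) (ω (Fin.last (N+1)))
        / timeMarg qref (Fin.last (N+1)) (ω (Fin.last (N+1))) = 1 := by
      rw [hStlast]
      exact div_self (ne_of_gt (p1 _))
    have hPH : (0:ℝ) < ∏ i : Fin (N+2),
        StS qref i (ω i) (ω (Fin.last (N+1))) / timeMarg qref i (ω i) := by
      apply Finset.prod_pos
      intro i _
      rcases Nat.lt_or_ge (i:ℕ) (N+1) with h|h
      · exact div_pos (hStpos i h _ _) (p1 i)
      · have hi : i = Fin.last (N+1) := Fin.ext (by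
          have h2 := i.isLt
          simp only [Fin.val_last]
          omega)
        rw [hi, hHlast]
        norm_num
    have hA : (∏ n : Fin (N+1), StS qref n.castSucc (ω n.castSucc) (ω (Fin.last (N+1)))
          / timeMarg qref n.castSucc (ω n.castSucc))
        = ∏ i : Fin (N+2), StS qref i (ω i) (ω (Fin.last (N+1))) / timeMarg qref i (ω i) := by
      have h := Fin.prod_univ_castSucc (fun i : Fin (N+2) =>
        StS qref i (ω i) (ω (Fin.last (N+1))) / timeMarg qref i (ω i))
      simp only [hHlast, mul_one] at h
      exact h.symm
    have hB : (∏ i : Fin (N+2), StS qref i (ω i) (ω (Fin.last (N+1))) / timeMarg qref i (ω i))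
        = (StS qref 0 (ω 0) (ω (Fin.last (N+1))) / timeMarg qref 0 (ω 0)) *
          ∏ n : Fin (N+1), StS qref n.succ (ω n.succ) (ω (Fin.last (N+1)))
            / timeMarg qref n.succ (ω n.succ) :=
      Fin.prod_univ_succ (fun i : Fin (N+2) =>
        StS qref i (ω i) (ω (Fin.last (N+1))) / timeMarg qref i (ω i))
    have hH0pos : (0:ℝ) < StS qref 0 (ω 0) (ω (Fin.last (N+1))) / timeMarg qref 0 (ω 0) :=
      div_pos (hStpos 0 (by simp only [Fin.val_zero]; omega) _ _) (p1 0)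
    have hBpos : (0:ℝ) < ∏ n : Fin (N+1), StS qref n.succ (ω n.succ) (ω (Fin.last (N+1)))
        / timeMarg qref n.succ (ω n.succ) := by
      have h := hPH
      rw [hB] at h
      nlinarith [hH0pos]
    have e1 : (∏ n : Fin (N+1), condTrans qref n (ω n.castSucc) (ω n.succ) (ω (Fin.last (N+1)))) *
        (StS qref 0 (ω 0) (ω (Fin.last (N+1))) / timeMarg qref 0 (ω 0))
        = ∏ n : Fin (N+1), transP qref n (ω n.castSucc) (ω n.succ) := by
      apply mul_right_cancel₀ (ne_of_gt hBpos)
      calc (∏ n : Fin (N+1), condTrans qref n (ω n.castSucc) (ω n.succ) (ω (Fin.last (N+1)))) *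
            (StS qref 0 (ω 0) (ω (Fin.last (N+1))) / timeMarg qref 0 (ω 0)) *
            ∏ n : Fin (N+1), StS qref n.succ (ω n.succ) (ω (Fin.last (N+1)))
              / timeMarg qref n.succ (ω n.succ)
          = (∏ n : Fin (N+1), condTrans qref n (ω n.castSucc) (ω n.succ) (ω (Fin.last (N+1)))) *
            ((StS qref 0 (ω 0) (ω (Fin.last (N+1))) / timeMarg qref 0 (ω 0)) *
             ∏ n : Fin (N+1), StS qref n.succ (ω n.succ) (ω (Fin.last (N+1)))
               / timeMarg qref n.succ (ω n.succ)) := by ring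
        _ = (∏ n : Fin (N+1), condTrans qref n (ω n.castSucc) (ω n.succ) (ω (Fin.last (N+1)))) *
            ∏ i : Fin (N+2), StS qref i (ω i) (ω (Fin.last (N+1))) / timeMarg qref i (ω i) := by
            rw [← hB]
        _ = (∏ n : Fin (N+1), condTrans qref n (ω n.castSucc) (ω n.succ) (ω (Fin.last (N+1)))) *
            ∏ n : Fin (N+1), StS qref n.castSucc (ω n.castSucc) (ω (Fin.last (N+1)))
              / timeMarg qref n.castSucc (ω n.castSucc) := by rw [hA]
        _ = (∏ n : Fin (N+1), transP qref n (ω n.castSucc) (ω n.succ)) *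
            ∏ n : Fin (N+1), StS qref n.succ (ω n.succ) (ω (Fin.last (N+1)))
              / timeMarg qref n.succ (ω n.succ) := h3b
    have hClast : condTrans qref (Fin.last N) (ω (Fin.last N).castSucc)
        (ω (Fin.last N).succ) (ω (Fin.last (N+1))) = 1 := by
      rw [condTrans_def]
      have hnum : SpS qref (Fin.last N) (ω (Fin.last N).castSucc) (ω (Fin.last N).succ)
          (ω (Fin.last (N+1)))
          = StS qref (Fin.last N).castSucc (ω (Fin.last N).castSucc) (ω (Fin.last (N+1))) := by
        unfold SpS StS
        apply Finset.sum_congr rfl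
        intro ω' _
        congr 1
        rw [Fin.succ_last]
        rw [eq_iff_iff]
        constructor
        · rintro ⟨h1, h2, h3⟩
          exact ⟨h1, h3⟩
        · rintro ⟨h1, h3⟩
          exact ⟨h1, h3, h3⟩
      rw [hnum]
      exact div_self (ne_of_gt (hStpos _ (by simp only [Fin.coe_castSucc, Fin.val_last]; omega) _ _))
    have hsplitC : (∏ n : Fin (N+1), condTrans qref n (ω n.castSucc) (ω n.succ)
          (ω (Fin.last (N+1))))
        = ∏ k : Fin N, condTrans qref k.castSucc (ω k.castSucc.castSucc) (ω k.succ.castSucc)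
            (ω (Fin.last (N+1))) := by
      rw [Fin.prod_univ_castSucc (fun n : Fin (N+1) =>
        condTrans qref n (ω n.castSucc) (ω n.succ) (ω (Fin.last (N+1))))]
      simp only [hClast, mul_one, Fin.succ_castSucc]
    rw [← hsplitC, hqrefM ω, ← e1]
    have hE0 : StS qref 0 (ω 0) (ω (Fin.last (N+1))) = endMarg qref (ω 0) (ω (Fin.last (N+1))) := rfl
    rw [hE0]
    have hα0 : timeMarg qref 0 (ω 0) ≠ 0 := ne_of_gt (p1 0)
    field_simp
  -- m in product form with initial marginal of q
  have hm_eq : ∀ ω : Traj X N, m ω = timeMarg q 0 (ω 0) *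
      ((∏ k : Fin N, transP m k.castSucc (ω k.castSucc.castSucc) (ω k.succ.castSucc)) *
        transP m (Fin.last N) (ω (Fin.last N).castSucc) (ω (Fin.last (N+1)))) := by
    intro ω
    rw [hmM ω, hm0]
    rw [Fin.prod_univ_castSucc (fun n : Fin (N+1) => transP m n (ω n.castSucc) (ω n.succ))]
    simp only [Fin.succ_castSucc, Fin.succ_last]
  have hPCpos : ∀ ω : Traj X N, (0:ℝ) < ∏ k : Fin N,
      condTrans qref k.castSucc (ω k.castSucc.castSucc) (ω k.succ.castSucc)
        (ω (Fin.last (N+1))) :=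
    fun ω => Finset.prod_pos (fun k _ => hCpos k.castSucc
      (by simp only [Fin.coe_castSucc]; exact k.isLt) _ _ _)
  -- pointwise log decomposition
  have step2 : ∀ ω : Traj X N, Real.log (q ω / m ω)
      = (∑ k : Fin N, (Real.log (condTrans qref k.castSucc (ω k.castSucc.castSucc)
            (ω k.succ.castSucc) (ω (Fin.last (N+1))))
          - Real.log (transP m k.castSucc (ω k.castSucc.castSucc) (ω k.succ.castSucc))))
        - Real.log (transP m (Fin.last N) (ω (Fin.last N).castSucc) (ω (Fin.last (N+1))))
        + Real.log (endMarg q (ω 0) (ω (Fin.last (N+1))) / timeMarg q 0 (ω 0)) := by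
    intro ω
    have pe : (0:ℝ) < endMarg q (ω 0) (ω (Fin.last (N+1))) := hqend _ _
    have pc := hPCpos ω
    have pE := hEpos (ω 0) (ω (Fin.last (N+1)))
    have pm0 : (0:ℝ) < timeMarg q 0 (ω 0) := hTMpos q hqpos 0 _
    have pTm : (0:ℝ) < ∏ k : Fin N, transP m k.castSucc (ω k.castSucc.castSucc)
        (ω k.succ.castSucc) := Finset.prod_pos (fun k _ => hmpos _ _ _)
    have pTl : (0:ℝ) < transP m (Fin.last N) (ω (Fin.last N).castSucc) (ω (Fin.last (N+1))) :=
      hmpos _ _ _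
    have hqe : q ω = endMarg q (ω 0) (ω (Fin.last (N+1))) *
        ∏ k : Fin N, condTrans qref k.castSucc (ω k.castSucc.castSucc) (ω k.succ.castSucc)
          (ω (Fin.last (N+1))) := by
      rw [hqrec ω]
      rw [step3 ω]
      field_simp
    rw [hqe, hm_eq ω]
    rw [Real.log_div (ne_of_gt (mul_pos pe pc)) (ne_of_gt (mul_pos pm0 (mul_pos pTm pTl)))]
    rw [Real.log_mul (ne_of_gt pe) (ne_of_gt pc),
        Real.log_mul (ne_of_gt pm0) (ne_of_gt (mul_pos pTm pTl)),
        Real.log_mul (ne_of_gt pTm) (ne_of_gt pTl)]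
    rw [Real.log_prod (fun k _ => ne_of_gt (hCpos k.castSucc
      (by simp only [Fin.coe_castSucc]; exact k.isLt) _ _ _))]
    rw [Real.log_prod (fun k _ => ne_of_gt (hmpos _ _ _))]
    rw [Real.log_div (ne_of_gt pe) (ne_of_gt pm0), Finset.sum_sub_distrib]
    ring
  -- constrained q-sums are proportional to constrained qref-sums
  have hQconst : ∀ (P : Traj X N → Prop) [DecidablePred P] (a b : X),
      (∀ ω, P ω → ω 0 = a ∧ ω (Fin.last (N+1)) = b) →
      (∑ ω : Traj X N, if P ω then q ω else 0)
        = (endMarg q a b / endMarg qref a b) * ∑ ω : Traj X N, if P ω then qref ω else 0 := by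
    intro P _ a b hP
    apply sum_ite_mul_const
    intro ω hω
    obtain ⟨h0, h1⟩ := hP ω hω
    rw [hqrec ω, h0, h1]
    ring
  -- third piece
  have piece3 : (∑ ω : Traj X N, q ω *
        Real.log (endMarg q (ω 0) (ω (Fin.last (N+1))) / timeMarg q 0 (ω 0)))
      = ∑ a : X, ∑ b : X, endMarg q a b * Real.log (endMarg q a b / timeMarg q 0 a) := by
    have h := sum_fiber q (fun ω => (ω 0, ω (Fin.last (N+1))))
      (fun t : X × X => Real.log (endMarg q t.1 t.2 / timeMarg q 0 t.1))
    simp only [Fintype.sum_prod_type] at h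
    refine h.trans ?_
    apply Finset.sum_congr rfl; intro a _
    apply Finset.sum_congr rfl; intro b _
    have e : (∑ ω : Traj X N, if (ω 0, ω (Fin.last (N+1))) = (a, b) then q ω else 0)
        = endMarg q a b := by
      unfold endMarg
      exact Finset.sum_congr rfl (fun ω _ => if_congr (by rw [Prod.mk.injEq]) rfl rfl)
    rw [e, mul_comm]
  -- second piece
  have piece2 : (∑ ω : Traj X N, q ω *
        Real.log (transP m (Fin.last N) (ω (Fin.last N).castSucc) (ω (Fin.last (N+1)))))
      = ∑ a : X, ∑ b : X, endMarg q a b *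
          ∑ y : X, bridgeAt qref ((Fin.last N).castSucc) y a b *
            Real.log (transP m (Fin.last N) y b) := by
    have h := sum_fiber q
      (fun ω => (ω 0, ω ((Fin.last N).castSucc), ω (Fin.last (N+1))))
      (fun t : X × X × X => Real.log (transP m (Fin.last N) t.2.1 t.2.2))
    simp only [Fintype.sum_prod_type] at h
    refine h.trans ?_
    apply Finset.sum_congr rfl; intro a _
    rw [Finset.sum_comm]
    apply Finset.sum_congr rfl; intro b _
    rw [Finset.mul_sum]
    apply Finset.sum_congr rfl; intro y _
    have e0 : (∑ ω : Traj X N,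
        if (ω 0, ω ((Fin.last N).castSucc), ω (Fin.last (N+1))) = (a, y, b) then q ω else 0)
        = ∑ ω : Traj X N, if ω 0 = a ∧ ω ((Fin.last N).castSucc) = y ∧ ω (Fin.last (N+1)) = b
            then q ω else 0 :=
      Finset.sum_congr rfl (fun ω _ => if_congr (by rw [Prod.mk.injEq, Prod.mk.injEq]) rfl rfl)
    have e1 := hQconst
      (fun ω => ω 0 = a ∧ ω ((Fin.last N).castSucc) = y ∧ ω (Fin.last (N+1)) = b) a b
      (fun ω hω => ⟨hω.1, hω.2.2⟩)
    have e2 : (∑ ω : Traj X N, if ω 0 = a ∧ ω ((Fin.last N).castSucc) = y ∧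
        ω (Fin.last (N+1)) = b then qref ω else 0) = S3 qref a ((Fin.last N).castSucc) y b := rfl
    rw [e0, e1, e2, bridgeAt_def]
    ring
  -- first piece
  have piece1 : ∀ k : Fin N, (∑ ω : Traj X N, q ω *
      (Real.log (condTrans qref k.castSucc (ω k.castSucc.castSucc) (ω k.succ.castSucc)
          (ω (Fin.last (N+1))))
        - Real.log (transP m k.castSucc (ω k.castSucc.castSucc) (ω k.succ.castSucc))))
      = ∑ a : X, ∑ b : X, endMarg q a b *
          ∑ y : X, bridgeAt qref k.castSucc.castSucc y a b *
            KLd (fun z : X => condTrans qref k.castSucc y z b)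
                (fun z : X => transP m k.castSucc y z) := by
    intro k
    have hkN : ((k.castSucc : Fin (N+1)):ℕ) < N := by
      simp only [Fin.coe_castSucc]
      exact k.isLt
    have h := sum_fiber q
      (fun ω => (ω 0, ω k.castSucc.castSucc, ω k.succ.castSucc, ω (Fin.last (N+1))))
      (fun t : X × X × X × X => Real.log (condTrans qref k.castSucc t.2.1 t.2.2.1 t.2.2.2)
        - Real.log (transP m k.castSucc t.2.1 t.2.2.1))
    simp only [Fintype.sum_prod_type] at h
    refine h.trans ?_
    apply Finset.sum_congr rfl; intro a _
    rw [sum3_comm]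
    apply Finset.sum_congr rfl; intro b _
    rw [Finset.mul_sum]
    apply Finset.sum_congr rfl; intro y _
    have hKL : KLd (fun z : X => condTrans qref k.castSucc y z b)
        (fun z : X => transP m k.castSucc y z)
        = ∑ z : X, condTrans qref k.castSucc y z b *
            (Real.log (condTrans qref k.castSucc y z b)
              - Real.log (transP m k.castSucc y z)) := by
      unfold KLd
      apply Finset.sum_congr rfl
      intro z _
      rw [Real.log_div (ne_of_gt (hCpos k.castSucc hkN y z b)) (ne_of_gt (hmpos _ _ _))]
    rw [hKL, Finset.mul_sum, Finset.mul_sum]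
    apply Finset.sum_congr rfl; intro z _
    have e0 : (∑ ω : Traj X N,
        if (ω 0, ω k.castSucc.castSucc, ω k.succ.castSucc, ω (Fin.last (N+1))) = (a, y, z, b)
          then q ω else 0)
        = ∑ ω : Traj X N, if ω 0 = a ∧ ω k.castSucc.castSucc = y ∧ ω k.succ.castSucc = z ∧
            ω (Fin.last (N+1)) = b then q ω else 0 :=
      Finset.sum_congr rfl (fun ω _ =>
        if_congr (by rw [Prod.mk.injEq, Prod.mk.injEq, Prod.mk.injEq]) rfl rfl)
    have e1 := hQconst
      (fun ω => ω 0 = a ∧ ω k.castSucc.castSucc = y ∧ ω k.succ.castSucc = z ∧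
        ω (Fin.last (N+1)) = b) a b
      (fun ω hω => ⟨hω.1, hω.2.2.2⟩)
    have e2 : (∑ ω : Traj X N, if ω 0 = a ∧ ω k.castSucc.castSucc = y ∧ ω k.succ.castSucc = z ∧
        ω (Fin.last (N+1)) = b then qref ω else 0) = A4 qref a k.castSucc y z b := by
      unfold A4
      simp only [Fin.succ_castSucc]
    have hα : (0:ℝ) < timeMarg qref k.castSucc.castSucc y := hTMpos qref hqrefpos _ _
    have hA4 : A4 qref a k.castSucc y z b * StS qref k.castSucc.castSucc y b
        = S3 qref a k.castSucc.castSucc y b * SpS qref k.castSucc y z b := by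
      have h1 := split1 k.castSucc a y z b
      have h2 := split2 k.castSucc.castSucc a y b
      apply mul_left_cancel₀ (ne_of_gt hα)
      calc timeMarg qref k.castSucc.castSucc y *
            (A4 qref a k.castSucc y z b * StS qref k.castSucc.castSucc y b)
          = (A4 qref a k.castSucc y z b * timeMarg qref k.castSucc.castSucc y) *
            StS qref k.castSucc.castSucc y b := by ring
        _ = (G2 qref a k.castSucc.castSucc y * SpS qref k.castSucc y z b) *
            StS qref k.castSucc.castSucc y b := by rw [h1]
        _ = (G2 qref a k.castSucc.castSucc y * StS qref k.castSucc.castSucc y b) *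
            SpS qref k.castSucc y z b := by ring
        _ = (S3 qref a k.castSucc.castSucc y b * timeMarg qref k.castSucc.castSucc y) *
            SpS qref k.castSucc y z b := by rw [← h2]
        _ = timeMarg qref k.castSucc.castSucc y *
            (S3 qref a k.castSucc.castSucc y b * SpS qref k.castSucc y z b) := by ring
    have hStne : StS qref k.castSucc.castSucc y b ≠ 0 :=
      ne_of_gt (hStpos _ (by simp only [Fin.coe_castSucc]; omega) y b)
    have hA4' : A4 qref a k.castSucc y z b
        = S3 qref a k.castSucc.castSucc y b * SpS qref k.castSucc y z b
          / StS qref k.castSucc.castSucc y b := by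
      field_simp
      linear_combination hA4
    rw [e0, e1, e2, hA4', bridgeAt_def, condTrans_def]
    ring
  -- final assembly
  rw [show KLd q m = ∑ ω : Traj X N, q ω * Real.log (q ω / m ω) from rfl]
  have hsplitsum : (∑ ω : Traj X N, q ω * Real.log (q ω / m ω))
      = (∑ ω : Traj X N, q ω * (∑ k : Fin N,
          (Real.log (condTrans qref k.castSucc (ω k.castSucc.castSucc) (ω k.succ.castSucc)
              (ω (Fin.last (N+1))))
            - Real.log (transP m k.castSucc (ω k.castSucc.castSucc) (ω k.succ.castSucc)))))
        - (∑ ω : Traj X N, q ω *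
            Real.log (transP m (Fin.last N) (ω (Fin.last N).castSucc) (ω (Fin.last (N+1)))))
        + (∑ ω : Traj X N, q ω *
            Real.log (endMarg q (ω 0) (ω (Fin.last (N+1))) / timeMarg q 0 (ω 0))) := by
    rw [← Finset.sum_sub_distrib, ← Finset.sum_add_distrib]
    apply Finset.sum_congr rfl
    intro ω _
    rw [step2 ω]
    ring
  have hexch : (∑ ω : Traj X N, q ω * (∑ k : Fin N,
      (Real.log (condTrans qref k.castSucc (ω k.castSucc.castSucc) (ω k.succ.castSucc)
          (ω (Fin.last (N+1))))
        - Real.log (transP m k.castSucc (ω k.castSucc.castSucc) (ω k.succ.castSucc)))))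
      = ∑ k : Fin N, ∑ ω : Traj X N, q ω *
          (Real.log (condTrans qref k.castSucc (ω k.castSucc.castSucc) (ω k.succ.castSucc)
              (ω (Fin.last (N+1))))
            - Real.log (transP m k.castSucc (ω k.castSucc.castSucc) (ω k.succ.castSucc))) := by
    rw [Finset.sum_congr rfl (fun (ω : Traj X N) (_ : ω ∈ Finset.univ) => Finset.mul_sum
      Finset.univ (fun k : Fin N =>
        Real.log (condTrans qref k.castSucc (ω k.castSucc.castSucc) (ω k.succ.castSucc)
            (ω (Fin.last (N+1))))
          - Real.log (transP m k.castSucc (ω k.castSucc.castSucc) (ω k.succ.castSucc))) (q ω))]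
    exact Finset.sum_comm
  rw [hsplitsum, hexch, piece2, piece3]
  congr 1
  congr 1
  exact Finset.sum_congr rfl (fun k _ => piece1 k)
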